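/- (Energy decay rate) If the kernel is admissible with β = min_r |γ_0(r)|² > 0, then for every m ≥ 1 and f ∈ L²(G): Σ_{p∈{1,…,J}^m} ‖U[p]f‖² ≤ (1−β) Σ_{p∈{1,…,J}^{m−1}} ‖U[p]f‖². -/

import Mathlib

open scoped BigOperators
open MeasureTheory

noncomputable def conv {G : Type*} [Group G] [Fintype G] (f g : G → ℂ) : G → ℂ :=
  fun x => (Fintype.card G : ℂ)⁻¹ * ∑ y, f y * g (y⁻¹ * x)

noncomputable def nsq {G : Type*} [Fintype G] (f : G → ℂ) : ℝ :=
  (Fintype.card G : ℝ)⁻¹ * ∑ x, Complex.normSq (f x)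

noncomputable def ip {G : Type*} [Fintype G] (f g : G → ℂ) : ℂ :=
  (Fintype.card G : ℂ)⁻¹ * ∑ x, f x * (starRingEnd ℂ) (g x)

noncomputable def gwavelet {G : Type*} [Group G] {k : ℕ} (d : Fin k → ℕ)
    (π : (r : Fin k) → G →* Matrix (Fin (d r)) (Fin (d r)) ℂ)
    (γ : Fin k → ℂ) : G → ℂ :=
  fun x => ∑ r, (d r : ℂ) * γ r * Matrix.trace (π r x)

noncomputable def Upath {G : Type*} [Group G] [Fintype G] {J : ℕ}
    (ψ : Fin J → G → ℂ) : List (Fin J) → (G → ℂ) → G → ℂ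
  | [], f => f
  | j :: p, f => Upath ψ p fun x => ((‖conv (ψ j) f x‖ : ℝ) : ℂ)

noncomputable def Sop {G : Type*} [Group G] [Fintype G] {k J : ℕ} (d : Fin k → ℕ)
    (π : (r : Fin k) → G →* Matrix (Fin (d r)) (Fin (d r)) ℂ)
    (γ : Fin (J + 1) → Fin k → ℂ) (p : List (Fin J)) (f : G → ℂ) : G → ℂ :=
  conv (gwavelet d π (γ 0)) (Upath (fun j => gwavelet d π (γ j.succ)) p f)

lemma entry_helper {m n : Type*} [Fintype m] [Fintype n] [DecidableEq m] [DecidableEq n]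
    (A : Matrix m m ℂ) (B : Matrix n n ℂ) (i : m) (j : n) (a : n) :
    (A * Matrix.single i j (1:ℂ) * B) i a = A i i * B j a := by
  rw [Matrix.mul_apply]
  simp [Matrix.mul_apply, Matrix.single, ite_and, mul_ite, ite_mul]

set_option linter.unusedSectionVars false
section dev
variable {G : Type*} [Group G] [Fintype G] {k : ℕ} {d : Fin k → ℕ}
  {π : (r : Fin k) → G →* Matrix (Fin (d r)) (Fin (d r)) ℂ}

lemma pi_inv (hunit : ∀ r x, π r x ∈ Matrix.unitaryGroup (Fin (d r)) ℂ) (r : Fin k) (x : G) :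
    star (π r x) = π r x⁻¹ := by
  have h1 : π r x * π r x⁻¹ = 1 := by rw [← map_mul, mul_inv_cancel, map_one]
  calc star (π r x) = star (π r x) * (π r x * π r x⁻¹) := by rw [h1, mul_one]
    _ = (star (π r x) * π r x) * π r x⁻¹ := by rw [mul_assoc]
    _ = π r x⁻¹ := by rw [(hunit r x).1, one_mul]

lemma conj_trace (hunit : ∀ r x, π r x ∈ Matrix.unitaryGroup (Fin (d r)) ℂ) (r : Fin k) (x : G) :
    (starRingEnd ℂ) (Matrix.trace (π r x)) = Matrix.trace (π r x⁻¹) := by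
  rw [← pi_inv hunit]
  exact (Matrix.trace_conjTranspose _).symm

lemma schur_comm (r s : Fin k) (E : Matrix (Fin (d r)) (Fin (d s)) ℂ) (x : G) :
    π r x * (∑ y : G, π r y * E * π s y⁻¹) = (∑ y : G, π r y * E * π s y⁻¹) * π s x := by
  rw [Matrix.mul_sum, Matrix.sum_mul]
  refine Fintype.sum_equiv (Equiv.mulLeft x) _ _ fun y => ?_
  have hc : π s x⁻¹ * π s x = 1 := by rw [← map_mul, inv_mul_cancel, map_one]
  simp only [Equiv.coe_mulLeft, map_mul, mul_inv_rev, Matrix.mul_assoc, hc, Matrix.mul_one]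

lemma schur_eq (hirr : ∀ (r : Fin k) (M : Matrix (Fin (d r)) (Fin (d r)) ℂ),
      (∀ x, M * π r x = π r x * M) → ∃ c : ℂ, M = c • (1 : Matrix (Fin (d r)) (Fin (d r)) ℂ))
    (r : Fin k) (hd : 0 < d r) (E : Matrix (Fin (d r)) (Fin (d r)) ℂ) :
    (∑ y : G, π r y * E * π r y⁻¹)
      = ((Fintype.card G : ℂ) * Matrix.trace E / (d r : ℂ)) • 1 := by
  obtain ⟨c, hc⟩ := hirr r _ (fun x => (schur_comm r r E x).symm)
  have htr : Matrix.trace (∑ y : G, π r y * E * π r y⁻¹)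
      = (Fintype.card G : ℂ) * Matrix.trace E := by
    rw [Matrix.trace_sum]
    have h1 : ∀ y : G, Matrix.trace (π r y * E * π r y⁻¹) = Matrix.trace E := fun y => by
      rw [Matrix.trace_mul_comm, ← mul_assoc, ← map_mul, inv_mul_cancel, map_one, one_mul]
    simp [h1, Finset.sum_const, mul_comm]
  rw [hc, Matrix.trace_smul, Matrix.trace_one] at htr
  rw [hc]
  congr 1
  have hdne : ((d r : ℂ)) ≠ 0 := by exact_mod_cast hd.ne'
  field_simp
  simpa [Fintype.card_fin, smul_eq_mul, mul_comm] using htr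

lemma conv_char
    (hirr : ∀ (r : Fin k) (M : Matrix (Fin (d r)) (Fin (d r)) ℂ),
      (∀ x, M * π r x = π r x * M) → ∃ c : ℂ, M = c • (1 : Matrix (Fin (d r)) (Fin (d r)) ℂ))
    (hneq : ∀ (r s : Fin k), r ≠ s → ∀ T : Matrix (Fin (d r)) (Fin (d s)) ℂ,
      (∀ x, π r x * T = T * π s x) → T = 0)
    (hdpos : ∀ r, 0 < d r) (r s : Fin k) (x : G) :
    conv (fun y => Matrix.trace (π r y)) (fun y => Matrix.trace (π s y)) x
      = if r = s then (d r : ℂ)⁻¹ * Matrix.trace (π r x) else 0 := by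
  have hN : ((Fintype.card G : ℂ)) ≠ 0 := by
    exact_mod_cast (Nat.cast_ne_zero (R := ℂ)).2 Fintype.card_ne_zero
  have expand : ∀ y : G, Matrix.trace (π r y) * Matrix.trace (π s (y⁻¹ * x))
      = ∑ i, ∑ j, ∑ a, (π r y) i i * ((π s y⁻¹) j a * (π s x) a j) := by
    intro y
    rw [map_mul, Matrix.trace, Matrix.trace, Finset.sum_mul_sum]
    refine Finset.sum_congr rfl fun i _ => Finset.sum_congr rfl fun j _ => ?_
    rw [Matrix.diag_apply, Matrix.diag_apply, Matrix.mul_apply, Finset.mul_sum]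
  have key : ∀ (i : Fin (d r)) (j a : Fin (d s)), (∑ y : G, (π r y) i i * (π s y⁻¹) j a)
      = (∑ y : G, π r y * Matrix.single i j (1:ℂ) * π s y⁻¹) i a := by
    intro i j a
    rw [Matrix.sum_apply]
    exact Finset.sum_congr rfl fun y _ => (entry_helper _ _ i j a).symm
  unfold conv
  simp only [expand]
  rw [Finset.sum_comm]
  have swap2 : ∀ i, ∑ y : G, ∑ j, ∑ a, (π r y) i i * ((π s y⁻¹) j a * (π s x) a j)
      = ∑ j, ∑ a, (∑ y : G, (π r y) i i * (π s y⁻¹) j a) * (π s x) a j := by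
    intro i
    rw [Finset.sum_comm]
    refine Finset.sum_congr rfl fun j _ => ?_
    rw [Finset.sum_comm]
    refine Finset.sum_congr rfl fun a _ => ?_
    rw [Finset.sum_mul]
    exact Finset.sum_congr rfl fun y _ => by ring
  simp only [swap2, key]
  by_cases hrs : r = s
  · subst hrs
    have htr : ∀ i j : Fin (d r), Matrix.trace (Matrix.single i j (1:ℂ))
        = if i = j then 1 else 0 := by
      intro i j
      by_cases h : i = j
      · subst h; simp [Matrix.trace, Matrix.diag, Matrix.single]
      · rw [if_neg h]
        simp only [Matrix.trace, Matrix.diag]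
        refine Finset.sum_eq_zero fun p _ => ?_
        simp only [Matrix.single, Matrix.of_apply, ite_eq_right_iff, and_imp]
        rintro rfl rfl; exact absurd rfl h
    simp only [schur_eq hirr r (hdpos r), if_pos rfl, htr, Matrix.smul_apply,
      Matrix.one_apply, smul_eq_mul]
    rw [if_pos trivial]
    simp only [mul_ite, ite_mul, mul_zero, zero_mul, mul_one, zero_div, ite_div]
    simp only [Finset.sum_ite_eq, Finset.mem_univ, if_true, Finset.sum_const_zero]
    rw [Matrix.trace, Finset.mul_sum, Finset.mul_sum]
    refine Finset.sum_congr rfl fun i _ => ?_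
    rw [Matrix.diag_apply]
    field_simp
  · simp only [if_neg hrs]
    have h0 : ∀ (i : Fin (d r)) (j a : Fin (d s)),
        ((∑ y : G, π r y * Matrix.single i j (1:ℂ) * π s y⁻¹) : Matrix _ _ ℂ) i a = 0 := by
      intro i j a
      rw [hneq r s hrs (∑ y : G, π r y * Matrix.single i j (1:ℂ) * π s y⁻¹)
        (fun z => schur_comm r s (Matrix.single i j (1:ℂ)) z)]
      exact Matrix.zero_apply i a
    simp only [h0, zero_mul, Finset.sum_const_zero, mul_zero]

lemma conv_sum_left {ι : Type*} (s : Finset ι) (a : ι → G → ℂ) (g : G → ℂ) (x : G) :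
    conv (fun y => ∑ j ∈ s, a j y) g x = ∑ j ∈ s, conv (a j) g x := by
  unfold conv
  simp only [Finset.sum_mul, Finset.mul_sum]
  rw [Finset.sum_comm]

lemma conv_sum_right {ι : Type*} (s : Finset ι) (a : G → ℂ) (g : ι → G → ℂ) (x : G) :
    conv a (fun y => ∑ j ∈ s, g j y) x = ∑ j ∈ s, conv a (g j) x := by
  unfold conv
  simp only [Finset.mul_sum]
  rw [Finset.sum_comm]

lemma conv_mul_left (c : ℂ) (a g : G → ℂ) (x : G) :
    conv (fun y => c * a y) g x = c * conv a g x := by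
  unfold conv
  rw [Finset.mul_sum, Finset.mul_sum, Finset.mul_sum]
  exact Finset.sum_congr rfl fun y _ => by ring

lemma conv_mul_right (c : ℂ) (a g : G → ℂ) (x : G) :
    conv a (fun y => c * g y) x = c * conv a g x := by
  unfold conv
  rw [Finset.mul_sum, Finset.mul_sum, Finset.mul_sum]
  exact Finset.sum_congr rfl fun y _ => by ring

lemma conv_add_left (a b g : G → ℂ) (x : G) :
    conv (fun y => a y + b y) g x = conv a g x + conv b g x := by
  unfold conv
  simp only [add_mul, Finset.sum_add_distrib, mul_add]

lemma ip_add_right (g u v : G → ℂ) :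
    ip g (fun x => u x + v x) = ip g u + ip g v := by
  unfold ip
  simp only [map_add, mul_add, Finset.sum_add_distrib]

lemma ip_sum_right {ι : Type*} (s : Finset ι) (g : G → ℂ) (h : ι → G → ℂ) :
    ip g (fun x => ∑ j ∈ s, h j x) = ∑ j ∈ s, ip g (h j) := by
  unfold ip
  simp only [map_sum, Finset.mul_sum]
  rw [Finset.sum_comm]

lemma gwavelet_sum {ι : Type*} (s : Finset ι) (c : ι → Fin k → ℂ) (x : G) :
    gwavelet d π (fun r => ∑ j ∈ s, c j r) x = ∑ j ∈ s, gwavelet d π (c j) x := by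
  unfold gwavelet
  rw [Finset.sum_comm]
  exact Finset.sum_congr rfl fun r _ => by rw [Finset.mul_sum, Finset.sum_mul]

lemma gwavelet_add (c e : Fin k → ℂ) (x : G) :
    gwavelet d π (fun r => c r + e r) x = gwavelet d π c x + gwavelet d π e x := by
  unfold gwavelet
  rw [← Finset.sum_add_distrib]
  exact Finset.sum_congr rfl fun r _ => by ring

lemma gwavelet_const_mul (t : ℂ) (c : Fin k → ℂ) (x : G) :
    gwavelet d π (fun r => t * c r) x = t * gwavelet d π c x := by
  unfold gwavelet
  rw [Finset.mul_sum]
  exact Finset.sum_congr rfl fun r _ => by ring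

lemma conv_assoc (a b g : G → ℂ) (x : G) :
    conv a (conv b g) x = conv (conv a b) g x := by
  unfold conv
  rw [Finset.mul_sum, Finset.mul_sum]
  have lhs_eq : ∀ i : G, (Fintype.card G:ℂ)⁻¹ * (a i * ((Fintype.card G:ℂ)⁻¹ * ∑ z, b z * g (z⁻¹ * (i⁻¹ * x))))
      = ∑ z, (Fintype.card G:ℂ)⁻¹ * ((Fintype.card G:ℂ)⁻¹ * (a i * (b z * g (z⁻¹ * (i⁻¹ * x))))) := by
    intro i
    rw [Finset.mul_sum, Finset.mul_sum, Finset.mul_sum]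
    exact Finset.sum_congr rfl fun z _ => by ring
  have rhs_eq : ∀ w : G, (Fintype.card G:ℂ)⁻¹ * (((Fintype.card G:ℂ)⁻¹ * ∑ y, a y * b (y⁻¹ * w)) * g (w⁻¹ * x))
      = ∑ y, (Fintype.card G:ℂ)⁻¹ * ((Fintype.card G:ℂ)⁻¹ * (a y * (b (y⁻¹ * w) * g (w⁻¹ * x)))) := by
    intro w
    rw [Finset.mul_sum, Finset.sum_mul, Finset.mul_sum]
    exact Finset.sum_congr rfl fun y _ => by ring
  simp only [lhs_eq, rhs_eq]
  conv_rhs => rw [Finset.sum_comm]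
  refine Finset.sum_congr rfl fun y _ => ?_
  refine Fintype.sum_equiv (Equiv.mulLeft y) _ _ fun z => ?_
  simp only [Equiv.coe_mulLeft, mul_inv_rev, inv_mul_cancel_left]
  rw [mul_assoc z⁻¹ y⁻¹ x]

lemma ip_conv_adj (a astar g h : G → ℂ) (hstar : ∀ y, astar y = (starRingEnd ℂ) (a y⁻¹)) :
    ip (conv a g) h = ip g (conv astar h) := by
  unfold ip conv
  rw [Finset.mul_sum, Finset.mul_sum]
  have lhs_eq : ∀ w : G, (Fintype.card G:ℂ)⁻¹ * (((Fintype.card G:ℂ)⁻¹ * ∑ y, a y * g (y⁻¹ * w)) * (starRingEnd ℂ) (h w))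
      = ∑ y, (Fintype.card G:ℂ)⁻¹ * ((Fintype.card G:ℂ)⁻¹ * (a y * (g (y⁻¹ * w) * (starRingEnd ℂ) (h w)))) := by
    intro w
    rw [Finset.mul_sum, Finset.sum_mul, Finset.mul_sum]
    exact Finset.sum_congr rfl fun y _ => by ring
  have rhs_eq : ∀ z : G, (Fintype.card G:ℂ)⁻¹ * (g z * (starRingEnd ℂ) ((Fintype.card G:ℂ)⁻¹ * ∑ y, astar y * h (y⁻¹ * z)))
      = ∑ y, (Fintype.card G:ℂ)⁻¹ * ((Fintype.card G:ℂ)⁻¹ * (a y * (g z * (starRingEnd ℂ) (h (y * z))))) := by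
    intro z
    rw [map_mul, map_sum]
    have hc : (starRingEnd ℂ) (((Fintype.card G : ℕ):ℂ))⁻¹ = ((Fintype.card G : ℕ):ℂ)⁻¹ := by
      rw [map_inv₀, map_natCast]
    rw [hc, Finset.mul_sum, Finset.mul_sum, Finset.mul_sum]
    refine Fintype.sum_equiv (Equiv.inv G) _ _ fun y => ?_
    simp only [Equiv.inv_apply, map_mul, hstar, Complex.conj_conj, inv_inv]
    ring
  simp only [lhs_eq, rhs_eq]
  rw [Finset.sum_comm]
  conv_rhs => rw [Finset.sum_comm]
  refine Finset.sum_congr rfl fun y _ => ?_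
  refine Fintype.sum_equiv (Equiv.mulLeft y⁻¹) _ _ fun z => ?_
  simp only [Equiv.coe_mulLeft, mul_inv_cancel_left]


lemma gwavelet_star (hunit : ∀ r x, π r x ∈ Matrix.unitaryGroup (Fin (d r)) ℂ)
    (c : Fin k → ℂ) (y : G) :
    gwavelet d π (fun r => (starRingEnd ℂ) (c r)) y = (starRingEnd ℂ) (gwavelet d π c y⁻¹) := by
  unfold gwavelet
  rw [map_sum]
  refine Finset.sum_congr rfl fun r _ => ?_
  rw [map_mul, map_mul, map_natCast, conj_trace hunit, inv_inv]

lemma ip_self (h : G → ℂ) : ip h h = (nsq h : ℂ) := by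
  unfold ip nsq
  push_cast
  rw [Finset.mul_sum, Finset.mul_sum]
  refine Finset.sum_congr rfl fun x _ => ?_
  rw [Complex.mul_conj]

lemma nsq_nonneg (h : G → ℂ) : 0 ≤ nsq h := by
  unfold nsq
  apply mul_nonneg (by positivity)
  exact Finset.sum_nonneg fun x _ => Complex.normSq_nonneg _

lemma nsq_abs (h : G → ℂ) : nsq (fun x => ((‖h x‖ : ℝ) : ℂ)) = nsq h := by
  unfold nsq
  congr 1
  refine Finset.sum_congr rfl fun x _ => ?_
  rw [Complex.normSq_ofReal, ← Complex.sq_norm, sq]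

lemma nsq_const_mul (c : ℂ) (h : G → ℂ) : nsq (fun x => c * h x) = Complex.normSq c * nsq h := by
  unfold nsq
  simp only [Complex.normSq_mul, Finset.mul_sum]
  exact Finset.sum_congr rfl fun x _ => by ring

lemma nsq_sub (u v : G → ℂ) :
    nsq (fun x => u x - v x) = nsq u - 2 * (ip u v).re + nsq v := by
  unfold nsq ip
  have hre : ((((Fintype.card G : ℕ) : ℂ))⁻¹ * ∑ x, u x * (starRingEnd ℂ) (v x)).re
      = ((Fintype.card G : ℕ) : ℝ)⁻¹ * ∑ x, (u x * (starRingEnd ℂ) (v x)).re := by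
    rw [show (((Fintype.card G : ℕ) : ℂ)) = Complex.ofReal ((Fintype.card G : ℕ) : ℝ) from by
      norm_cast]
    rw [← Complex.ofReal_inv, Complex.re_ofReal_mul, Complex.re_sum]
  rw [hre]
  simp only [Finset.mul_sum]
  rw [← Finset.sum_sub_distrib, ← Finset.sum_add_distrib]
  refine Finset.sum_congr rfl fun x _ => ?_
  have h2 : Complex.normSq (u x - v x)
      = Complex.normSq (u x) - 2*(u x * (starRingEnd ℂ) (v x)).re + Complex.normSq (v x) := by
    simp [Complex.normSq_sub]; ring
  rw [h2]; ring

lemma ip_const_mul_right (t : ℂ) (g h : G → ℂ) :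
    ip g (fun x => t * h x) = (starRingEnd ℂ) t * ip g h := by
  unfold ip
  simp only [map_mul, Finset.mul_sum]
  exact Finset.sum_congr rfl fun x _ => by ring

lemma conv_gw
    (hirr : ∀ (r : Fin k) (M : Matrix (Fin (d r)) (Fin (d r)) ℂ),
      (∀ x, M * π r x = π r x * M) → ∃ c : ℂ, M = c • (1 : Matrix (Fin (d r)) (Fin (d r)) ℂ))
    (hneq : ∀ (r s : Fin k), r ≠ s → ∀ T : Matrix (Fin (d r)) (Fin (d s)) ℂ,
      (∀ x, π r x * T = T * π s x) → T = 0)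
    (hdpos : ∀ r, 0 < d r) (c e : Fin k → ℂ) (x : G) :
    conv (gwavelet d π c) (gwavelet d π e) x = gwavelet d π (fun r => c r * e r) x := by
  have h1 : conv (gwavelet d π c) (gwavelet d π e) x
      = ∑ r, (d r : ℂ) * c r * conv (fun y => Matrix.trace (π r y)) (gwavelet d π e) x := by
    rw [show conv (gwavelet d π c) (gwavelet d π e) x
        = conv (fun y => ∑ r, (d r : ℂ) * c r * Matrix.trace (π r y)) (gwavelet d π e) x from rfl]
    rw [conv_sum_left]
    exact Finset.sum_congr rfl fun r _ => conv_mul_left _ _ _ _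
  rw [h1]
  have h2 : ∀ r, conv (fun y => Matrix.trace (π r y)) (gwavelet d π e) x
      = e r * Matrix.trace (π r x) := by
    intro r
    rw [show conv (fun y => Matrix.trace (π r y)) (gwavelet d π e) x
        = conv (fun y => Matrix.trace (π r y)) (fun y => ∑ s, (d s : ℂ) * e s * Matrix.trace (π s y)) x from rfl]
    rw [conv_sum_right]
    have h3 : ∀ s, conv (fun y => Matrix.trace (π r y)) (fun y => (d s : ℂ) * e s * Matrix.trace (π s y)) x
        = (d s : ℂ) * e s * (if r = s then (d r : ℂ)⁻¹ * Matrix.trace (π r x) else 0) := by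
      intro s
      rw [show (fun y => (d s : ℂ) * e s * Matrix.trace (π s y)) = fun y => ((d s : ℂ) * e s) * Matrix.trace (π s y) from rfl]
      rw [conv_mul_right, conv_char hirr hneq hdpos r s x]
    simp only [h3]
    rw [Fintype.sum_eq_single r (fun s hsr => by rw [if_neg (Ne.symm hsr), mul_zero])]
    rw [if_pos rfl]
    have hdne : ((d r : ℂ)) ≠ 0 := by exact_mod_cast (hdpos r).ne'
    field_simp
  simp only [h2]
  unfold gwavelet
  exact Finset.sum_congr rfl fun r _ => by ring

lemma nsq_conv_gw (hunit : ∀ r x, π r x ∈ Matrix.unitaryGroup (Fin (d r)) ℂ)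
    (hirr : ∀ (r : Fin k) (M : Matrix (Fin (d r)) (Fin (d r)) ℂ),
      (∀ x, M * π r x = π r x * M) → ∃ c : ℂ, M = c • (1 : Matrix (Fin (d r)) (Fin (d r)) ℂ))
    (hneq : ∀ (r s : Fin k), r ≠ s → ∀ T : Matrix (Fin (d r)) (Fin (d s)) ℂ,
      (∀ x, π r x * T = T * π s x) → T = 0)
    (hdpos : ∀ r, 0 < d r) (c : Fin k → ℂ) (g : G → ℂ) :
    ((nsq (conv (gwavelet d π c) g)) : ℂ)
      = ip g (conv (gwavelet d π (fun r => (starRingEnd ℂ) (c r) * c r)) g) := by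
  rw [← ip_self]
  rw [ip_conv_adj (gwavelet d π c) (gwavelet d π fun r => (starRingEnd ℂ) (c r)) g _
    (fun y => gwavelet_star hunit c y)]
  congr 1
  funext z
  rw [conv_assoc]
  rw [show conv (gwavelet d π fun r => (starRingEnd ℂ) (c r)) (gwavelet d π c)
      = gwavelet d π (fun r => (starRingEnd ℂ) (c r) * c r) from
    funext (conv_gw hirr hneq hdpos _ _)]

lemma ip_conv_gw_sum {ι : Type*} (s : Finset ι) (cs : ι → Fin k → ℂ) (g : G → ℂ) :
    ip g (conv (gwavelet d π (fun r => ∑ j ∈ s, cs j r)) g)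
      = ∑ j ∈ s, ip g (conv (gwavelet d π (cs j)) g) := by
  have h1 : conv (gwavelet d π (fun r => ∑ j ∈ s, cs j r)) g
      = fun x => ∑ j ∈ s, conv (gwavelet d π (cs j)) g x := by
    funext x
    rw [show gwavelet d π (fun r => ∑ j ∈ s, cs j r) = fun y => ∑ j ∈ s, gwavelet d π (cs j) y from
      funext (gwavelet_sum s cs), conv_sum_left]
  rw [h1, ip_sum_right]

lemma ip_conv_gw_add (c e : Fin k → ℂ) (g : G → ℂ) :
    ip g (conv (gwavelet d π (fun r => c r + e r)) g)
      = ip g (conv (gwavelet d π c) g) + ip g (conv (gwavelet d π e) g) := by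
  have h1 : conv (gwavelet d π (fun r => c r + e r)) g
      = fun x => conv (gwavelet d π c) g x + conv (gwavelet d π e) g x := by
    funext x
    rw [show gwavelet d π (fun r => c r + e r) = fun y => gwavelet d π c y + gwavelet d π e y from
      funext (gwavelet_add c e), conv_add_left]
  rw [h1, ip_add_right]

lemma ip_conv_gw_const (t : ℂ) (c : Fin k → ℂ) (g : G → ℂ) :
    ip g (conv (gwavelet d π (fun r => t * c r)) g)
      = (starRingEnd ℂ) t * ip g (conv (gwavelet d π c) g) := by
  have h1 : conv (gwavelet d π (fun r => t * c r)) g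
      = fun x => t * conv (gwavelet d π c) g x := by
    funext x
    rw [show gwavelet d π (fun r => t * c r) = fun y => t * gwavelet d π c y from
      funext (gwavelet_const_mul t c), conv_mul_left]
  rw [h1, ip_const_mul_right]

lemma core_decay (hunit : ∀ r x, π r x ∈ Matrix.unitaryGroup (Fin (d r)) ℂ)
    (hirr : ∀ (r : Fin k) (M : Matrix (Fin (d r)) (Fin (d r)) ℂ),
      (∀ x, M * π r x = π r x * M) → ∃ c : ℂ, M = c • (1 : Matrix (Fin (d r)) (Fin (d r)) ℂ))
    (hneq : ∀ (r s : Fin k), r ≠ s → ∀ T : Matrix (Fin (d r)) (Fin (d s)) ℂ,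
      (∀ x, π r x * T = T * π s x) → T = 0)
    (hdpos : ∀ r, 0 < d r)
    {J : ℕ} (γ : Fin (J + 1) → Fin k → ℂ)
    (hPar : ∀ r : Fin k, ∑ j : Fin (J + 1), Complex.normSq (γ j r) = 1)
    (β : ℝ) (hβ : ∀ r : Fin k, β ≤ Complex.normSq (γ 0 r)) (hβ1 : β ≤ 1)
    (g : G → ℂ) :
    ∑ j : Fin J, nsq (conv (gwavelet d π (γ j.succ)) g) ≤ (1 - β) * nsq g := by
  set c1 : Fin k → ℂ := fun _ => (1 : ℂ) with hc1
  set S : ℝ := nsq (conv (gwavelet d π c1) g) with hSdef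
  have hFact := nsq_conv_gw (π := π) hunit hirr hneq hdpos
  have hc1star : (fun r => (starRingEnd ℂ) (c1 r) * c1 r) = c1 := by
    funext r; simp [hc1]
  have h1 : ip g (conv (gwavelet d π c1) g) = (S : ℂ) := by
    rw [hSdef, hFact c1, hc1star]
  -- (a) total energy
  have hsum : ∑ j : Fin (J + 1), nsq (conv (gwavelet d π (γ j)) g) = S := by
    have hC : ((∑ j : Fin (J + 1), nsq (conv (gwavelet d π (γ j)) g) : ℝ) : ℂ) = (S : ℂ) := by
      rw [Complex.ofReal_sum]
      calc ∑ j : Fin (J + 1), ((nsq (conv (gwavelet d π (γ j)) g) : ℝ) : ℂ)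
          = ∑ j : Fin (J + 1), ip g (conv (gwavelet d π
              (fun r => (starRingEnd ℂ) (γ j r) * γ j r)) g) :=
            Finset.sum_congr rfl fun j _ => hFact (γ j) g
        _ = ip g (conv (gwavelet d π (fun r => ∑ j : Fin (J + 1),
              (starRingEnd ℂ) (γ j r) * γ j r)) g) :=
            (ip_conv_gw_sum Finset.univ (fun j r => (starRingEnd ℂ) (γ j r) * γ j r) g).symm
        _ = ip g (conv (gwavelet d π c1) g) := by
            congr 1
            have : (fun r => ∑ j : Fin (J + 1), (starRingEnd ℂ) (γ j r) * γ j r) = c1 := by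
              funext r
              have hj : ∀ j : Fin (J + 1), (starRingEnd ℂ) (γ j r) * γ j r
                  = ((Complex.normSq (γ j r) : ℝ) : ℂ) := fun j => by
                rw [mul_comm, Complex.mul_conj]
              simp only [hj]
              rw [← Complex.ofReal_sum, hPar r, Complex.ofReal_one, hc1]
            rw [this]
        _ = (S : ℂ) := h1
    exact_mod_cast hC
  -- (b) zero-channel lower bound
  have hβle : β * S ≤ nsq (conv (gwavelet d π (γ 0)) g) := by
    set δ : Fin k → ℂ := fun r => ((Real.sqrt (Complex.normSq (γ 0 r) - β) : ℝ) : ℂ) with hδ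
    have hdecomp : (fun r => (starRingEnd ℂ) (γ 0 r) * γ 0 r)
        = fun r => ((starRingEnd ℂ) (δ r) * δ r) + ((β : ℂ) * c1 r) := by
      funext r
      have h2 : (starRingEnd ℂ) (δ r) * δ r = ((Complex.normSq (γ 0 r) - β : ℝ) : ℂ) := by
        rw [hδ]
        simp only [Complex.conj_ofReal, ← Complex.ofReal_mul]
        rw [Real.mul_self_sqrt (sub_nonneg.2 (hβ r))]
      have h3 : (starRingEnd ℂ) (γ 0 r) * γ 0 r = ((Complex.normSq (γ 0 r) : ℝ) : ℂ) := by
        rw [mul_comm, Complex.mul_conj]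
      rw [h2, h3, hc1]
      push_cast
      ring
    have hC : ((nsq (conv (gwavelet d π (γ 0)) g) : ℝ) : ℂ)
        = ((nsq (conv (gwavelet d π δ) g) : ℝ) : ℂ) + ((β * S : ℝ) : ℂ) := by
      rw [hFact (γ 0) g, hdecomp, ip_conv_gw_add, ← hFact δ g, ip_conv_gw_const, h1]
      rw [Complex.conj_ofReal]
      push_cast
      ring
    have hR : nsq (conv (gwavelet d π (γ 0)) g) = nsq (conv (gwavelet d π δ) g) + β * S := by
      exact_mod_cast hC
    have := nsq_nonneg (conv (gwavelet d π δ) g)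
    linarith
  -- (c) projection bound
  have hcap : S ≤ nsq g := by
    have hexp : nsq (fun x => g x - conv (gwavelet d π c1) g x)
        = nsq g - 2 * (ip g (conv (gwavelet d π c1) g)).re + S := nsq_sub _ _
    rw [h1] at hexp
    have := nsq_nonneg (fun x => g x - conv (gwavelet d π c1) g x)
    rw [hexp] at this
    simp only [Complex.ofReal_re] at this
    linarith
  -- conclude
  rw [Fin.sum_univ_succ] at hsum
  have hmul : (1 - β) * S ≤ (1 - β) * nsq g :=
    mul_le_mul_of_nonneg_left hcap (by linarith)
  have hring : (1 - β) * S = S - β * S := by ring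
  linarith

lemma path_split {J n : ℕ} (Ψ : Fin J → G → ℂ) (f : G → ℂ) :
    ∑ p : Fin (n + 1) → Fin J, nsq (Upath Ψ (List.ofFn p) f)
      = ∑ j : Fin J, ∑ q : Fin n → Fin J,
          nsq (Upath Ψ (List.ofFn q) (fun x => ((‖conv (Ψ j) f x‖ : ℝ) : ℂ))) := by
  calc ∑ p : Fin (n + 1) → Fin J, nsq (Upath Ψ (List.ofFn p) f)
      = ∑ x : Fin J × (Fin n → Fin J), nsq (Upath Ψ (List.ofFn (Fin.cons x.1 x.2)) f) :=
        (Fintype.sum_equiv (Fin.consEquiv fun _ => Fin J)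
          (fun x => nsq (Upath Ψ (List.ofFn (Fin.cons x.1 x.2)) f))
          (fun p => nsq (Upath Ψ (List.ofFn p) f)) (fun x => rfl)).symm
    _ = ∑ x : Fin J × (Fin n → Fin J), nsq (Upath Ψ (List.ofFn x.2)
          (fun y => ((‖conv (Ψ x.1) f y‖ : ℝ) : ℂ))) := by
        refine Finset.sum_congr rfl fun x _ => ?_
        rw [List.ofFn_succ]
        simp only [Fin.cons_zero, Fin.cons_succ]
        rfl
    _ = _ := Fintype.sum_prod_type _

lemma path_zero {J : ℕ} (Ψ : Fin J → G → ℂ) (f : G → ℂ) :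
    ∑ p : Fin 0 → Fin J, nsq (Upath Ψ (List.ofFn p) f) = nsq f := by
  rw [Fintype.sum_unique]
  rfl

end dev

theorem stmt13 {G : Type*} [Group G] [Fintype G]
    {k : ℕ} (d : Fin k → ℕ) (hdpos : ∀ r, 0 < d r)
    (π : (r : Fin k) → G →* Matrix (Fin (d r)) (Fin (d r)) ℂ)
    (hunit : ∀ r x, π r x ∈ Matrix.unitaryGroup (Fin (d r)) ℂ)
    (hirr : ∀ (r : Fin k) (M : Matrix (Fin (d r)) (Fin (d r)) ℂ),
      (∀ x, M * π r x = π r x * M) → ∃ c : ℂ, M = c • (1 : Matrix (Fin (d r)) (Fin (d r)) ℂ))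
    (hneq : ∀ (r s : Fin k), r ≠ s → ∀ T : Matrix (Fin (d r)) (Fin (d s)) ℂ,
      (∀ x, π r x * T = T * π s x) → T = 0)
    (hcard : Nat.card (ConjClasses G) = k)
    {J : ℕ} (γ : Fin (J + 1) → Fin k → ℂ)
    (hPar : ∀ r : Fin k, ∑ j : Fin (J + 1), Complex.normSq (γ j r) = 1)
    (β : ℝ) (hβpos : 0 < β) (hβ : ∀ r : Fin k, β ≤ Complex.normSq (γ 0 r))
    (f : G → ℂ) (m : ℕ) :
    ∑ p : Fin (m + 1) → Fin J,
        nsq (Upath (fun j => gwavelet d π (γ j.succ)) (List.ofFn p) f)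
      ≤ (1 - β) * ∑ p : Fin m → Fin J,
          nsq (Upath (fun j => gwavelet d π (γ j.succ)) (List.ofFn p) f) := by
  have hk : 0 < k := by
    rw [← hcard]
    have : Nonempty (ConjClasses G) := ⟨ConjClasses.mk 1⟩
    exact Nat.card_pos
  have hβ1 : β ≤ 1 := by
    refine le_trans (hβ ⟨0, hk⟩) ?_
    rw [← hPar ⟨0, hk⟩]
    exact Finset.single_le_sum (f := fun j => Complex.normSq (γ j ⟨0, hk⟩))
      (fun j _ => Complex.normSq_nonneg _) (Finset.mem_univ 0)
  induction m generalizing f with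
  | zero =>
    rw [path_zero, path_split]
    have hb : ∀ j : Fin J, ∑ q : Fin 0 → Fin J,
        nsq (Upath (fun j => gwavelet d π (γ j.succ)) (List.ofFn q)
          (fun x => ((‖conv (gwavelet d π (γ j.succ)) f x‖ : ℝ) : ℂ)))
        = nsq (conv (gwavelet d π (γ j.succ)) f) := by
      intro j
      rw [path_zero, nsq_abs]
    rw [Finset.sum_congr rfl fun j _ => hb j]
    exact core_decay hunit hirr hneq hdpos γ hPar β hβ hβ1 f
  | succ n ih =>
    rw [path_split]
    have hstep : ∀ j : Fin J,
        ∑ q : Fin (n + 1) → Fin J,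
          nsq (Upath (fun j => gwavelet d π (γ j.succ)) (List.ofFn q)
            (fun x => ((‖conv (gwavelet d π (γ j.succ)) f x‖ : ℝ) : ℂ)))
        ≤ (1 - β) * ∑ q : Fin n → Fin J,
            nsq (Upath (fun j => gwavelet d π (γ j.succ)) (List.ofFn q)
              (fun x => ((‖conv (gwavelet d π (γ j.succ)) f x‖ : ℝ) : ℂ))) :=
      fun j => ih _
    calc ∑ j : Fin J, ∑ q : Fin (n + 1) → Fin J,
          nsq (Upath (fun j => gwavelet d π (γ j.succ)) (List.ofFn q)
            (fun x => ((‖conv (gwavelet d π (γ j.succ)) f x‖ : ℝ) : ℂ)))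
        ≤ ∑ j : Fin J, (1 - β) * ∑ q : Fin n → Fin J,
            nsq (Upath (fun j => gwavelet d π (γ j.succ)) (List.ofFn q)
              (fun x => ((‖conv (gwavelet d π (γ j.succ)) f x‖ : ℝ) : ℂ))) :=
          Finset.sum_le_sum fun j _ => hstep j
      _ = (1 - β) * ∑ j : Fin J, ∑ q : Fin n → Fin J,
            nsq (Upath (fun j => gwavelet d π (γ j.succ)) (List.ofFn q)
              (fun x => ((‖conv (gwavelet d π (γ j.succ)) f x‖ : ℝ) : ℂ))) :=
          (Finset.mul_sum _ _ _).symm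
      _ = (1 - β) * ∑ p : Fin (n + 1) → Fin J,
            nsq (Upath (fun j => gwavelet d π (γ j.succ)) (List.ofFn p) f) := by
          rw [← path_split]
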